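/- arXiv:0903.3471 — 2 statements merged into one kernel-verified Lean document; each statement's English description precedes it below -/
import Mathlib

section
/- For f_n(z) = Σ_{k=0}^n a_k z^{k+1} with a_0 ≠ 0 and k ∈ ℤ, the quantity a_0^{n−2k−1} μ_k(f_n) is a polynomial in a_0, a_1, conj(a_1), …, a_n, conj(a_n); in particular μ_k(f_n) is a rational function of the coefficients with denominator a power of a_0. -/
open Finset

/-- The polynomial `f_n(z) = Σ_{k=0}^n a_k z^{k+1}` as a formal Laurent series. -/
noncomputable def fL (n : ℕ) (a : ℕ → ℂ) : LaurentSeries ℂ :=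
  ∑ k ∈ Finset.range (n + 1), HahnSeries.single ((k : ℤ) + 1) (a k)

/-- `f_n^*(z) = Σ_{k=0}^n conj(a_k) z^{-k-1}` as a formal Laurent series. -/
noncomputable def fStar (n : ℕ) (a : ℕ → ℂ) : LaurentSeries ℂ :=
  ∑ k ∈ Finset.range (n + 1), HahnSeries.single (-(k : ℤ) - 1) ((starRingEnd ℂ) (a k))

/-- `f_n'(z) = Σ_{k=0}^n (k+1) a_k z^k` as a formal Laurent series. -/
noncomputable def fD (n : ℕ) (a : ℕ → ℂ) : LaurentSeries ℂ :=
  ∑ k ∈ Finset.range (n + 1), HahnSeries.single ((k : ℤ)) (((k : ℂ) + 1) * a k)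

/-- The `k`th moment `μ_k(f_n) = CT_z (z f_n^* f_n' f_n^k)`, the constant term of
the formal Laurent series `z f_n^*(z) f_n'(z) f_n(z)^k` (with `f_n^k` interpreted
in the field of formal Laurent series for negative `k`). -/
noncomputable def mu (n : ℕ) (a : ℕ → ℂ) (k : ℤ) : ℂ :=
  ((HahnSeries.single (1 : ℤ) (1 : ℂ)) * fStar n a * fD n a * (fL n a) ^ k).coeff 0

theorem coe_monomial (m : ℕ) (c : ℂ) :
    ((PowerSeries.monomial m c : PowerSeries ℂ) : LaurentSeries ℂ)
      = HahnSeries.single (m : ℤ) c := by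
  ext i
  rw [PowerSeries.coeff_coe]
  rcases lt_or_ge i 0 with h | h
  · rw [if_pos h, HahnSeries.coeff_single_of_ne (by omega)]
  · rw [if_neg (not_lt.2 h), PowerSeries.coeff_monomial, HahnSeries.coeff_single]
    by_cases hm : i = (m : ℤ)
    · simp [hm]
    · rw [if_neg (by omega), if_neg hm]

noncomputable def vc (n : ℕ) (a : ℕ → ℂ) : PowerSeries ℂ :=
  ∑ i : Fin n, PowerSeries.monomial ((i : ℕ) + 1) (a ((i : ℕ) + 1) / a 0)

theorem constantCoeff_one_add_vc (n : ℕ) (a : ℕ → ℂ) :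
    PowerSeries.constantCoeff (1 + vc n a) = 1 := by
  simp only [map_add, map_one, vc, map_sum]
  have : ∀ i : Fin n, (PowerSeries.constantCoeff)
      ((PowerSeries.monomial ((i:ℕ) + 1)) (a ((i:ℕ) + 1) / a 0)) = 0 := by
    intro i
    rw [← PowerSeries.coeff_zero_eq_constantCoeff_apply, PowerSeries.coeff_monomial]
    simp
  simp [this]

theorem fL_factor (n : ℕ) (a : ℕ → ℂ) (ha : a 0 ≠ 0) :
    fL n a = HahnSeries.single (1 : ℤ) (a 0) * ((1 + vc n a : PowerSeries ℂ) : LaurentSeries ℂ) := by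
  rw [fL, vc]
  push_cast
  rw [map_sum, mul_add, mul_one, Finset.mul_sum]
  rw [Finset.sum_range_succ' (fun k : ℕ => HahnSeries.single ((k : ℤ) + 1) (a k))]
  have hsum : (∑ x ∈ Finset.range n, HahnSeries.single (((x+1:ℕ):ℤ) + 1) (a (x + 1)))
      = ∑ i : Fin n, HahnSeries.single (1:ℤ) (a 0) *
        (HahnSeries.ofPowerSeries ℤ ℂ) ((PowerSeries.monomial ((i:ℕ) + 1)) (a ((i:ℕ) + 1) / a 0)) := by
    rw [Fin.sum_univ_eq_sum_range (fun i : ℕ => HahnSeries.single (1:ℤ) (a 0) *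
      (HahnSeries.ofPowerSeries ℤ ℂ) ((PowerSeries.monomial (i + 1)) (a (i + 1) / a 0)))]
    refine Finset.sum_congr rfl fun i _ => ?_
    rw [show ((PowerSeries.monomial (i + 1)) (a (i + 1) / a 0) : LaurentSeries ℂ)
        = HahnSeries.single ((i:ℤ) + 1) (a (i+1) / a 0) from by
      rw [coe_monomial]; norm_num]
    rw [HahnSeries.single_mul_single, mul_div_cancel₀ _ ha]
    congr 1
    push_cast
    ring_nf
  rw [hsum, add_comm]
  norm_num

noncomputable def Wc (n : ℕ) (a : ℕ → ℂ) (k : ℤ) : PowerSeries ℂ :=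
  (if 0 ≤ k then 1 + vc n a else PowerSeries.invOfUnit (1 + vc n a) 1) ^ k.natAbs

theorem fL_inv (n : ℕ) (a : ℕ → ℂ) (ha : a 0 ≠ 0) :
    (fL n a)⁻¹ = HahnSeries.single (-1 : ℤ) (a 0)⁻¹ *
      ((PowerSeries.invOfUnit (1 + vc n a) 1 : PowerSeries ℂ) : LaurentSeries ℂ) := by
  symm
  apply eq_inv_of_mul_eq_one_left
  rw [fL_factor n a ha]
  calc HahnSeries.single (-1 : ℤ) (a 0)⁻¹ *
        ((PowerSeries.invOfUnit (1 + vc n a) 1 : PowerSeries ℂ) : LaurentSeries ℂ) *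
        (HahnSeries.single (1 : ℤ) (a 0) * ((1 + vc n a : PowerSeries ℂ) : LaurentSeries ℂ))
      = (HahnSeries.single (-1 : ℤ) (a 0)⁻¹ * HahnSeries.single (1 : ℤ) (a 0)) *
        (((PowerSeries.invOfUnit (1 + vc n a) 1 * (1 + vc n a) : PowerSeries ℂ)) : LaurentSeries ℂ) := by
        rw [PowerSeries.coe_mul]; ring
    _ = 1 := by
        rw [PowerSeries.invOfUnit_mul _ _ (by rw [constantCoeff_one_add_vc]; rfl),
          HahnSeries.single_mul_single, inv_mul_cancel₀ ha]
        norm_num [HahnSeries.single_zero_one]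

theorem fL_zpow (n : ℕ) (a : ℕ → ℂ) (ha : a 0 ≠ 0) (k : ℤ) :
    (fL n a) ^ k = HahnSeries.single k ((a 0) ^ k) *
      ((Wc n a k : PowerSeries ℂ) : LaurentSeries ℂ) := by
  rcases le_or_gt 0 k with hk | hk
  · rw [Wc, if_pos hk]
    obtain ⟨m, rfl⟩ : ∃ m : ℕ, k = (m : ℤ) := ⟨k.toNat, (Int.toNat_of_nonneg hk).symm⟩
    rw [zpow_natCast, zpow_natCast, fL_factor n a ha, mul_pow, HahnSeries.single_pow,
      PowerSeries.coe_pow, Int.natAbs_natCast]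
    norm_num
  · rw [Wc, if_neg (not_le.2 hk)]
    obtain ⟨m, rfl⟩ : ∃ m : ℕ, k = -(m : ℤ) := ⟨k.natAbs, by omega⟩
    rw [zpow_neg, zpow_natCast, ← inv_pow, fL_inv n a ha, mul_pow, HahnSeries.single_pow,
      ← PowerSeries.coe_pow]
    rw [zpow_neg, zpow_natCast, ← inv_pow]
    norm_num

noncomputable def wcf (n : ℕ) (a : ℕ → ℂ) (k : ℤ) (j : ℤ) : ℂ :=
  if j < 0 then 0 else PowerSeries.coeff j.natAbs (Wc n a k)

theorem coeff_sum' {α : Type} (s : Finset α) (f : α → LaurentSeries ℂ) (g : ℤ) :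
    (∑ i ∈ s, f i).coeff g = ∑ i ∈ s, (f i).coeff g :=
  map_sum (HahnSeries.coeff.addMonoidHom g) f s

theorem coeff_zero_single_mul (b : ℤ) (r : ℂ) (x : LaurentSeries ℂ) :
    (HahnSeries.single b r * x).coeff 0 = r * x.coeff (-b) := by
  have := HahnSeries.coeff_single_mul_add (r := r) (x := x) (a := -b) (b := b)
  simpa using this

theorem mu_eq_sum (n : ℕ) (a : ℕ → ℂ) (ha : a 0 ≠ 0) (k : ℤ) :
    mu n a k = ∑ p ∈ Finset.range (n+1), ∑ q ∈ Finset.range (n+1),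
      (starRingEnd ℂ) (a p) * ((q:ℂ)+1) * a q * (a 0)^k * wcf n a k ((p:ℤ) - q - k) := by
  rw [mu, fL_zpow n a ha k, fStar, fD]
  simp only [Finset.mul_sum, Finset.sum_mul]
  rw [Finset.sum_comm, coeff_sum']
  refine Finset.sum_congr rfl fun p _ => ?_
  rw [coeff_sum']
  refine Finset.sum_congr rfl fun q _ => ?_
  show (HahnSeries.single (1:ℤ) (1:ℂ) * HahnSeries.single (-(p:ℤ) - 1) ((starRingEnd ℂ) (a p)) *
      HahnSeries.single ((q:ℤ)) (((q:ℂ) + 1) * a q) *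
      (HahnSeries.single (k:ℤ) ((a 0)^k) * _)).coeff 0 = _
  rw [HahnSeries.single_mul_single, HahnSeries.single_mul_single, ← mul_assoc,
    HahnSeries.single_mul_single, coeff_zero_single_mul, PowerSeries.coeff_coe]
  rw [show -(1 + (-(p:ℤ) - 1) + q + k) = (p:ℤ) - q - k by ring]
  rw [wcf]
  split_ifs with h
  · simp
  · ring

abbrev Rr (n : ℕ) := MvPolynomial (Fin (n + 1) ⊕ Fin n) ℂ
abbrev Ss (n : ℕ) := Localization.Away (MvPolynomial.X (Sum.inl 0) : Rr n)

noncomputable def uu (n : ℕ) : (Ss n)ˣ :=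
  (IsLocalization.Away.algebraMap_isUnit (S := Ss n) (MvPolynomial.X (Sum.inl 0) : Rr n)).unit

theorem uu_spec (n : ℕ) : ((uu n : (Ss n)ˣ) : Ss n)
    = algebraMap (Rr n) (Ss n) (MvPolynomial.X (Sum.inl 0)) :=
  IsUnit.unit_spec _

noncomputable def vS (n : ℕ) : PowerSeries (Ss n) :=
  ∑ i : Fin n, PowerSeries.monomial ((i:ℕ) + 1)
    (algebraMap (Rr n) (Ss n) (MvPolynomial.X (Sum.inl i.succ)) * ((uu n)⁻¹ : (Ss n)ˣ))

def Tame (n : ℕ) (f : PowerSeries (Ss n)) : Prop :=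
  ∀ m : ℕ, ((uu n : (Ss n)ˣ) : Ss n)^m * PowerSeries.coeff m f ∈ (algebraMap (Rr n) (Ss n)).range

theorem tame_one (n : ℕ) : Tame n 1 := by
  intro m
  rw [PowerSeries.coeff_one]
  split_ifs with h
  · subst h; exact ⟨1, by simp⟩
  · exact ⟨0, by simp⟩

theorem tame_mul (n : ℕ) {f g : PowerSeries (Ss n)} (hf : Tame n f) (hg : Tame n g) :
    Tame n (f * g) := by
  intro m
  rw [PowerSeries.coeff_mul, Finset.mul_sum]
  refine Subring.sum_mem _ fun p hp => ?_
  rw [Finset.HasAntidiagonal.mem_antidiagonal] at hp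
  have : ((uu n : (Ss n)ˣ) : Ss n) ^ m * (PowerSeries.coeff p.1 f * PowerSeries.coeff p.2 g)
      = (((uu n : (Ss n)ˣ) : Ss n) ^ p.1 * PowerSeries.coeff p.1 f) *
        (((uu n : (Ss n)ˣ) : Ss n) ^ p.2 * PowerSeries.coeff p.2 g) := by
    rw [← hp, pow_add]; ring
  rw [this]
  exact Subring.mul_mem _ (hf p.1) (hg p.2)

theorem tame_pow (n : ℕ) {f : PowerSeries (Ss n)} (hf : Tame n f) (m : ℕ) : Tame n (f ^ m) := by
  induction m with
  | zero => simpa using tame_one n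
  | succ j ih => rw [pow_succ]; exact tame_mul n ih hf

theorem tame_one_add_vS (n : ℕ) : Tame n (1 + vS n) := by
  intro m
  rw [map_add, mul_add]
  refine Subring.add_mem _ (tame_one n m) ?_
  rw [vS, map_sum, Finset.mul_sum]
  refine Subring.sum_mem _ fun i _ => ?_
  rw [PowerSeries.coeff_monomial]
  split_ifs with h
  · subst h
    have : ((uu n : (Ss n)ˣ) : Ss n) ^ ((i:ℕ)+1) *
        (algebraMap (Rr n) (Ss n) (MvPolynomial.X (Sum.inl i.succ)) * ((uu n)⁻¹ : (Ss n)ˣ)) =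
        algebraMap (Rr n) (Ss n) (MvPolynomial.X (Sum.inl i.succ)) *
          ((uu n : (Ss n)ˣ) : Ss n) ^ (i:ℕ) := by
      rw [← Units.val_pow_eq_pow_val, ← Units.val_pow_eq_pow_val]
      have : (uu n) ^ ((i:ℕ)+1) * (uu n)⁻¹ = (uu n) ^ (i:ℕ) := by
        rw [pow_succ, mul_assoc]; simp
      calc ((uu n ^ ((i:ℕ)+1) : (Ss n)ˣ) : Ss n) *
            (algebraMap (Rr n) (Ss n) (MvPolynomial.X (Sum.inl i.succ)) * ((uu n)⁻¹ : (Ss n)ˣ))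
          = algebraMap (Rr n) (Ss n) (MvPolynomial.X (Sum.inl i.succ)) *
            ((uu n ^ ((i:ℕ)+1) * (uu n)⁻¹ : (Ss n)ˣ) : Ss n) := by
            rw [Units.val_mul]; ring
        _ = _ := by rw [this]
    rw [this, uu_spec, ← map_pow, ← map_mul]
    exact RingHom.mem_range_self _ _
  · exact ⟨0, by simp⟩

theorem tame_invOfUnit (n : ℕ) : Tame n (PowerSeries.invOfUnit (1 + vS n) 1) := by
  intro m
  induction m using Nat.strong_induction_on with
  | _ m ih =>
    rw [PowerSeries.coeff_invOfUnit]
    split_ifs with h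
    · subst h; exact ⟨1, by simp⟩
    · simp only [inv_one, Units.val_one, neg_mul, one_mul, mul_neg, Finset.mul_sum]
      refine Subring.sum_mem _ fun p hp => ?_
      rw [Finset.HasAntidiagonal.mem_antidiagonal] at hp
      have hx : ∀ x : Ss n, ((uu n : (Ss n)ˣ) : Ss n) ^ m * (-1 * x)
          = -(((uu n : (Ss n)ˣ) : Ss n) ^ m * x) := fun x => by ring
      refine Subring.neg_mem ((algebraMap (Rr n) (Ss n)).range) ?_
      split_ifs with h2
      · have : ((uu n : (Ss n)ˣ) : Ss n) ^ m *
            (PowerSeries.coeff p.1 (1 + vS n) *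
              PowerSeries.coeff p.2 (PowerSeries.invOfUnit (1 + vS n) 1))
            = (((uu n : (Ss n)ˣ) : Ss n) ^ p.1 * PowerSeries.coeff p.1 (1 + vS n)) *
              (((uu n : (Ss n)ˣ) : Ss n) ^ p.2 *
                PowerSeries.coeff p.2 (PowerSeries.invOfUnit (1 + vS n) 1)) := by
          rw [← hp, pow_add]; ring
        rw [this]
        exact Subring.mul_mem _ (tame_one_add_vS n p.1) (ih p.2 h2)
      · exact ⟨0, by simp⟩

noncomputable def WS (n : ℕ) (k : ℤ) : PowerSeries (Ss n) :=
  (if 0 ≤ k then 1 + vS n else PowerSeries.invOfUnit (1 + vS n) 1) ^ k.natAbs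

theorem tame_WS (n : ℕ) (k : ℤ) : Tame n (WS n k) := by
  rw [WS]
  split_ifs
  · exact tame_pow n (tame_one_add_vS n) _
  · exact tame_pow n (tame_invOfUnit n) _

noncomputable def wSf (n : ℕ) (k : ℤ) (j : ℤ) : Ss n :=
  if j < 0 then 0 else PowerSeries.coeff j.natAbs (WS n k)

noncomputable def CV (n : ℕ) (p : Fin (n+1)) : Rr n :=
  if h : (p:ℕ) = 0 then MvPolynomial.X (Sum.inl 0)
  else MvPolynomial.X (Sum.inr ⟨(p:ℕ)-1, by omega⟩)

noncomputable def Gam (n : ℕ) (p q : Fin (n+1)) : Rr n :=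
  CV n p * MvPolynomial.C ((q:ℂ)+1) * MvPolynomial.X (Sum.inl q)

noncomputable def MUgen (n : ℕ) (k : ℤ) : Ss n :=
  ∑ p : Fin (n+1), ∑ q : Fin (n+1),
    algebraMap (Rr n) (Ss n) (Gam n p q) * ((uu n ^ k : (Ss n)ˣ) : Ss n) *
      wSf n k ((p:ℤ) - q - k)

theorem MUgen_mem (n : ℕ) (k : ℤ) :
    ((uu n ^ ((n:ℤ) - 2*k - 1) : (Ss n)ˣ) : Ss n) * MUgen n k
      ∈ (algebraMap (Rr n) (Ss n)).range := by
  rw [MUgen, Finset.mul_sum]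
  refine Subring.sum_mem _ fun p _ => ?_
  rw [Finset.mul_sum]
  refine Subring.sum_mem _ fun q _ => ?_
  by_cases hm : ((p:ℤ) - q - k) < 0
  · rw [wSf, if_pos hm]
    exact ⟨0, by simp⟩
  · push_neg at hm
    obtain ⟨m, hm2⟩ : ∃ m : ℕ, (m : ℤ) = (p:ℤ) - q - k := ⟨_, Int.toNat_of_nonneg hm⟩
    rw [show ((p:ℤ) - q - k) = (m:ℤ) from hm2.symm]
    have hw : wSf n k (m:ℤ) = PowerSeries.coeff m (WS n k) := by
      rw [wSf, if_neg (by exact_mod_cast not_lt.2 (Int.natCast_nonneg m)), Int.natAbs_natCast]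
    set E : ℤ := (n:ℤ) - 1 - p + q with hE
    have hsplit : ((n:ℤ) - 2*k - 1) + k = E + (m:ℤ) := by rw [hE, hm2]; ring
    have hu : ((uu n ^ ((n:ℤ) - 2*k - 1) : (Ss n)ˣ) : Ss n) * ((uu n ^ k : (Ss n)ˣ) : Ss n)
        = ((uu n ^ E : (Ss n)ˣ) : Ss n) *
          (((uu n : (Ss n)ˣ) : Ss n) ^ m) := by
      rw [← Units.val_mul, ← zpow_add, hsplit, zpow_add, zpow_natCast, Units.val_mul,
        Units.val_pow_eq_pow_val]
    have hterm : ((uu n ^ ((n:ℤ) - 2*k - 1) : (Ss n)ˣ) : Ss n) *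
        (algebraMap (Rr n) (Ss n) (Gam n p q) * ((uu n ^ k : (Ss n)ˣ) : Ss n) * wSf n k (m:ℤ))
        = algebraMap (Rr n) (Ss n) (Gam n p q) * ((uu n ^ E : (Ss n)ˣ) : Ss n) *
          ((((uu n : (Ss n)ˣ) : Ss n) ^ m) * PowerSeries.coeff m (WS n k)) := by
      rw [hw]
      calc ((uu n ^ ((n:ℤ) - 2*k - 1) : (Ss n)ˣ) : Ss n) *
            (algebraMap (Rr n) (Ss n) (Gam n p q) * ((uu n ^ k : (Ss n)ˣ) : Ss n) *
              PowerSeries.coeff m (WS n k))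
          = algebraMap (Rr n) (Ss n) (Gam n p q) *
            (((uu n ^ ((n:ℤ) - 2*k - 1) : (Ss n)ˣ) : Ss n) * ((uu n ^ k : (Ss n)ˣ) : Ss n)) *
            PowerSeries.coeff m (WS n k) := by ring
        _ = _ := by rw [hu]; ring
    rw [hterm]
    by_cases hexc : (p:ℕ) = n ∧ (q:ℕ) = 0
    · have hEneg : E = -1 := by rw [hE]; omega
      have hq0 : (q:ℤ) = 0 := by exact_mod_cast hexc.2
      have : algebraMap (Rr n) (Ss n) (Gam n p q) * ((uu n ^ E : (Ss n)ˣ) : Ss n)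
          = algebraMap (Rr n) (Ss n) (CV n p * MvPolynomial.C ((q:ℂ)+1)) := by
        rw [hEneg, Gam, map_mul]
        have hq' : (q : Fin (n+1)) = (0 : Fin (n+1)) := by
          ext; exact hexc.2
        have hx0 : (MvPolynomial.X (Sum.inl q) : Rr n) = MvPolynomial.X (Sum.inl 0) := by
          rw [hq']
        rw [zpow_neg_one, hx0, ← uu_spec, mul_assoc, Units.mul_inv, mul_one]
      rw [this]
      exact Subring.mul_mem _ (RingHom.mem_range_self _ _) (tame_WS n k m)
    · have hEpos : 0 ≤ E := by
        rw [hE]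
        have h1 : (p:ℕ) < n + 1 := p.isLt
        have h2 : (q:ℕ) < n + 1 := q.isLt
        omega
      have : ((uu n ^ E : (Ss n)ˣ) : Ss n)
          = algebraMap (Rr n) (Ss n) ((MvPolynomial.X (Sum.inl 0) : Rr n) ^ E.toNat) := by
        rw [map_pow, ← uu_spec, ← Units.val_pow_eq_pow_val, ← zpow_natCast,
          Int.toNat_of_nonneg hEpos]
      rw [this]
      exact Subring.mul_mem _
        (Subring.mul_mem _ (RingHom.mem_range_self _ _) (RingHom.mem_range_self _ _))
        (tame_WS n k m)

theorem map_monomial' {R S : Type*} [Semiring R] [Semiring S] (f : R →+* S) (m : ℕ) (c : R) :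
    PowerSeries.map f (PowerSeries.monomial m c) = PowerSeries.monomial m (f c) := by
  ext j
  rw [PowerSeries.coeff_map, PowerSeries.coeff_monomial, PowerSeries.coeff_monomial]
  split_ifs <;> simp

noncomputable def gev (n : ℕ) (a : ℕ → ℂ) : Rr n →+* ℂ :=
  MvPolynomial.eval (Sum.elim (fun i : Fin (n + 1) => a i)
    (fun i : Fin n => (starRingEnd ℂ) (a ((i : ℕ) + 1))))

theorem gev_x0 (n : ℕ) (a : ℕ → ℂ) :
    gev n a (MvPolynomial.X (Sum.inl 0)) = a 0 := by
  rw [gev, MvPolynomial.eval_X]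
  rfl

noncomputable def psi (n : ℕ) (a : ℕ → ℂ) (ha : a 0 ≠ 0) : Ss n →+* ℂ :=
  IsLocalization.Away.lift (S := Ss n) (g := gev n a)
    (MvPolynomial.X (Sum.inl 0) : Rr n)
    (by rw [gev_x0]; exact isUnit_iff_ne_zero.2 ha)

theorem psi_alg (n : ℕ) (a : ℕ → ℂ) (ha : a 0 ≠ 0) (r : Rr n) :
    psi n a ha (algebraMap (Rr n) (Ss n) r) = gev n a r :=
  IsLocalization.Away.lift_eq _ _ _

theorem psi_u (n : ℕ) (a : ℕ → ℂ) (ha : a 0 ≠ 0) :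
    psi n a ha ((uu n : (Ss n)ˣ) : Ss n) = a 0 := by
  rw [uu_spec, psi_alg, gev_x0]

theorem psi_uzpow (n : ℕ) (a : ℕ → ℂ) (ha : a 0 ≠ 0) (z : ℤ) :
    psi n a ha ((uu n ^ z : (Ss n)ˣ) : Ss n) = (a 0) ^ z := by
  have h1 : ((uu n ^ z : (Ss n)ˣ) : Ss n) = ((uu n ^ z : (Ss n)ˣ) : Ss n) := rfl
  calc psi n a ha ((uu n ^ z : (Ss n)ˣ) : Ss n)
      = ((Units.map (psi n a ha).toMonoidHom (uu n ^ z) : ℂˣ) : ℂ) := by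
        rw [Units.coe_map]; rfl
    _ = ((Units.map (psi n a ha).toMonoidHom (uu n) ^ z : ℂˣ) : ℂ) := by rw [map_zpow]
    _ = ((Units.map (psi n a ha).toMonoidHom (uu n) : ℂˣ) : ℂ) ^ z := by
        rw [Units.val_zpow_eq_zpow_val]
    _ = (a 0) ^ z := by rw [Units.coe_map]; rw [show ((psi n a ha).toMonoidHom
          ((uu n : (Ss n)ˣ) : Ss n)) = a 0 from psi_u n a ha]

theorem constantCoeff_one_add_vS (n : ℕ) :
    PowerSeries.constantCoeff (1 + vS n) = 1 := by
  rw [map_add, map_one, vS, map_sum]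
  have : ∀ i : Fin n, (PowerSeries.constantCoeff)
      ((PowerSeries.monomial ((i:ℕ) + 1))
        (algebraMap (Rr n) (Ss n) (MvPolynomial.X (Sum.inl i.succ)) * ((uu n)⁻¹ : (Ss n)ˣ))) = 0 := by
    intro i
    rw [← PowerSeries.coeff_zero_eq_constantCoeff_apply, PowerSeries.coeff_monomial]
    simp
  simp [this]

theorem map_one_add_vS (n : ℕ) (a : ℕ → ℂ) (ha : a 0 ≠ 0) :
    PowerSeries.map (psi n a ha) (1 + vS n) = 1 + vc n a := by
  rw [map_add, map_one]
  congr 1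
  rw [vS, vc, map_sum]
  refine Finset.sum_congr rfl fun i _ => ?_
  rw [map_monomial']
  congr 1
  rw [map_mul, psi_alg]
  have h1 : gev n a (MvPolynomial.X (Sum.inl i.succ)) = a ((i:ℕ)+1) := by
    rw [gev, MvPolynomial.eval_X]
    simp [Fin.val_succ]
  have h2 : psi n a ha (((uu n)⁻¹ : (Ss n)ˣ) : Ss n) = (a 0)⁻¹ := by
    have := map_mul (psi n a ha) ((uu n : (Ss n)ˣ) : Ss n) (((uu n)⁻¹ : (Ss n)ˣ) : Ss n)
    rw [← Units.val_mul, mul_inv_cancel, Units.val_one, map_one, psi_u] at this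
    exact eq_inv_of_mul_eq_one_right this.symm
  rw [h1, h2, div_eq_mul_inv]

theorem map_WS (n : ℕ) (a : ℕ → ℂ) (ha : a 0 ≠ 0) (k : ℤ) :
    PowerSeries.map (psi n a ha) (WS n k) = Wc n a k := by
  rw [WS, Wc, map_pow]
  congr 1
  split_ifs with h
  · exact map_one_add_vS n a ha
  · have h2 : (1 + vc n a) *
        PowerSeries.map (psi n a ha) (PowerSeries.invOfUnit (1 + vS n) 1) = 1 := by
      rw [← map_one_add_vS n a ha, ← map_mul,
        PowerSeries.mul_invOfUnit _ _ (by rw [constantCoeff_one_add_vS]; rfl), map_one]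
    have h3 : (1 + vc n a) * PowerSeries.invOfUnit (1 + vc n a) 1 = 1 :=
      PowerSeries.mul_invOfUnit _ _ (by rw [constantCoeff_one_add_vc]; rfl)
    calc PowerSeries.map (psi n a ha) (PowerSeries.invOfUnit (1 + vS n) 1)
        = PowerSeries.invOfUnit (1 + vc n a) 1 *
          ((1 + vc n a) * PowerSeries.map (psi n a ha) (PowerSeries.invOfUnit (1 + vS n) 1)) := by
          rw [← mul_assoc, mul_comm (PowerSeries.invOfUnit (1 + vc n a) 1), h3, one_mul]
      _ = PowerSeries.invOfUnit (1 + vc n a) 1 := by rw [h2, mul_one]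

theorem psi_wSf (n : ℕ) (a : ℕ → ℂ) (ha : a 0 ≠ 0) (k j : ℤ) :
    psi n a ha (wSf n k j) = wcf n a k j := by
  rw [wSf, wcf]
  split_ifs with h
  · simp
  · rw [← map_WS n a ha k, PowerSeries.coeff_map]

theorem psi_MUgen (n : ℕ) (a : ℕ → ℂ) (ha : a 0 ≠ 0)
    (hconj : (starRingEnd ℂ) (a 0) = a 0) (k : ℤ) :
    psi n a ha (MUgen n k) = mu n a k := by
  rw [mu_eq_sum n a ha k, MUgen, map_sum]
  rw [← Fin.sum_univ_eq_sum_range (fun p : ℕ => ∑ q ∈ Finset.range (n+1),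
      (starRingEnd ℂ) (a p) * ((q:ℂ)+1) * a q * (a 0)^k * wcf n a k ((p:ℤ) - q - k))]
  refine Finset.sum_congr rfl fun p _ => ?_
  rw [map_sum]
  rw [← Fin.sum_univ_eq_sum_range (fun q : ℕ =>
      (starRingEnd ℂ) (a p) * ((q:ℂ)+1) * a q * (a 0)^k * wcf n a k ((p:ℤ) - q - k))]
  refine Finset.sum_congr rfl fun q _ => ?_
  rw [map_mul, map_mul, psi_alg, psi_uzpow, psi_wSf]
  have hGam : gev n a (Gam n p q) = (starRingEnd ℂ) (a p) * ((q:ℂ)+1) * a q := by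
    rw [Gam, map_mul, map_mul]
    have hC : gev n a (MvPolynomial.C ((q:ℂ)+1)) = (q:ℂ)+1 := by
      rw [gev, MvPolynomial.eval_C]
    have hx : gev n a (MvPolynomial.X (Sum.inl q)) = a q := by
      rw [gev, MvPolynomial.eval_X, Sum.elim_inl]
    have hcv : gev n a (CV n p) = (starRingEnd ℂ) (a p) := by
      rw [CV]
      split_ifs with hp
      · rw [gev_x0, hp, hconj]
      · rw [gev, MvPolynomial.eval_X]
        show (starRingEnd ℂ) (a (((p:ℕ) - 1) + 1)) = (starRingEnd ℂ) (a p)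
        congr 2
        omega
    rw [hcv, hx, hC]
  rw [hGam]

/-- `a₀^{n-2k-1} μ_k(f_n)` is a polynomial in `a₀, a₁, conj a₁, …, a_n, conj a_n`
(here `a₀` is treated as a real variable, `conj a₀ = a₀`). -/
theorem mu_polynomial_in_coefficients (n : ℕ) (k : ℤ) :
    ∃ P : MvPolynomial (Fin (n + 1) ⊕ Fin n) ℂ,
      ∀ a : ℕ → ℂ, a 0 ≠ 0 → (starRingEnd ℂ) (a 0) = a 0 →
        (a 0) ^ ((n : ℤ) - 2 * k - 1) * mu n a k =
          MvPolynomial.eval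
            (Sum.elim (fun i : Fin (n + 1) => a i)
              (fun i : Fin n => (starRingEnd ℂ) (a ((i : ℕ) + 1)))) P := by
  obtain ⟨P, hP⟩ := MUgen_mem n k
  refine ⟨P, fun a ha hconj => ?_⟩
  have h1 := congrArg (psi n a ha) hP
  rw [map_mul, psi_uzpow, psi_MUgen n a ha hconj k, psi_alg] at h1
  exact h1.symm
end

section
/- For f_1(z) = a_0 z + a_1 z^2 with a_0 ≠ 0, the moment μ_{−1}(f_1) equals a_1 − a_1^2 conj(a_1)/a_0^2. -/
open Finset

/-- `μ_{-1}(f₁) = a₁ − a₁² conj(a₁)/a₀²` (with `a₀` real). -/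
theorem mu_neg_one_formula (a : ℕ → ℂ) (ha : a 0 ≠ 0)
    (hreal : (starRingEnd ℂ) (a 0) = a 0) :
    mu 1 a (-1) = a 1 - (a 1) ^ 2 * (starRingEnd ℂ) (a 1) / (a 0) ^ 2 := by
  classical
  set A := a 0 with hA
  set B := a 1 with hB
  set Bc := (starRingEnd ℂ) (a 1) with hBc
  set q0 : ℂ := B - B ^ 2 * Bc / A ^ 2 with hq0
  have ha0 : a 0 ≠ 0 := ha
  have hreal0 : (starRingEnd ℂ) (a 0) = a 0 := hreal
  clear_value A B Bc q0
  set f : LaurentSeries ℂ := fL 1 a with hf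
  have hfe : f = HahnSeries.single (1:ℤ) A + HahnSeries.single (2:ℤ) B := by
    simp [hf, fL, Finset.sum_range_succ, hA, hB]
  have hfc : f.coeff 1 = A := by
    simp [hfe, HahnSeries.coeff_single]
  have hf0 : f ≠ 0 := fun h => ha (by simpa [h, hA] using hfc.symm)
  have hford : f.order ≤ 1 :=
    HahnSeries.order_le_of_coeff_ne_zero (by rw [hfc]; exact ha)
  have hinv0 : f⁻¹ ≠ 0 := inv_ne_zero hf0
  have hordsum : f.order + f⁻¹.order = 0 := by
    rw [← HahnSeries.order_mul hf0 hinv0, mul_inv_cancel₀ hf0, HahnSeries.order_one]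
  have hinvcoeff : f⁻¹.coeff (-2) = 0 := by
    apply HahnSeries.coeff_eq_zero_of_lt_order
    omega
  set q : LaurentSeries ℂ :=
    HahnSeries.single (-2:ℤ) Bc + HahnSeries.single (-1:ℤ) (A + B * Bc / A)
      + HahnSeries.single (0:ℤ) q0 with hq
  set s : LaurentSeries ℂ := HahnSeries.single (2:ℤ) (-(q0 * B)) with hs
  have key : HahnSeries.single (1:ℤ) (1:ℂ) * fStar 1 a * fD 1 a = q * f + s := by
    ext g
    simp [fStar, fD, hq, hs, hfe, Finset.sum_range_succ, mul_add, add_mul, sub_mul,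
      HahnSeries.single_mul_single, HahnSeries.coeff_single, hreal0, hA, hB, hBc, hq0]
    split_ifs <;> first | omega | ring1 | (field_simp [ha0]; ring1)
  have hmu : mu 1 a (-1) = ((q * f + s) * f⁻¹).coeff 0 := by
    rw [mu, key, zpow_neg, zpow_one, hf]
  rw [hmu, add_mul, mul_assoc, mul_inv_cancel₀ hf0, mul_one]
  have hsf : (s * f⁻¹).coeff 0 = (-(q0 * B)) * f⁻¹.coeff (-2) := by
    have := HahnSeries.coeff_single_mul_add (r := -(q0 * B)) (x := f⁻¹) (a := (-2:ℤ)) (b := (2:ℤ))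
    rw [hs, show (0:ℤ) = -2 + 2 by norm_num]; exact this
  have hqc : q.coeff 0 = q0 := by
    simp [hq, HahnSeries.coeff_single]
  rw [HahnSeries.coeff_add, hqc, hsf, hinvcoeff, mul_zero, add_zero, hq0]
end
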